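/- Let V be a symplectic F_2-vector space of dimension 2g (g ≥ 1), and let S ⊆ Q(V) be a set of quadratic forms such that every 3-element subset of S is syzygetic. Then the set of vectors {q_0 + q : q ∈ S} ⊆ V (for any fixed q_0 ∈ S) spans an isotropic subspace of V; consequently |S| ≤ 2^g. -/

import Mathlib

/-- `F₂^{2g}` as `F₂^g × F₂^g`. -/
abbrev V (g : ℕ) := (Fin g → ZMod 2) × (Fin g → ZMod 2)

/-- The standard symplectic form `⟨(x,y),(x',y')⟩ = x·y' + x'·y` on `F₂^{2g}`. -/
def B {g : ℕ} (u v : V g) : ZMod 2 := ∑ i, u.1 i * v.2 i + ∑ i, v.1 i * u.2 i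

/-- Quadratic forms with polarity the standard symplectic form. -/
def IsQuad {g : ℕ} (q : V g → ZMod 2) : Prop :=
  ∀ u v, q (u + v) = q u + q v + B u v

/-- The Arf invariant with respect to the standard symplectic basis. -/
def arf {g : ℕ} (q : V g → ZMod 2) : ZMod 2 :=
  ∑ i, q (Pi.single i 1, 0) * q (0, Pi.single i 1)

section aux
variable {g : ℕ}

lemma B_comm (u v : V g) : B u v = B v u := by
  simp [B]; ring

lemma B_zero_left (v : V g) : B 0 v = 0 := by simp [B]

lemma B_zero_right (v : V g) : B v 0 = 0 := by simp [B]

lemma B_add_left (u u' v : V g) : B (u + u') v = B u v + B u' v := by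
  simp [B, add_mul, mul_add, Finset.sum_add_distrib]; ring

lemma B_add_right (u v v' : V g) : B u (v + v') = B u v + B u v' := by
  simp [B, add_mul, mul_add, Finset.sum_add_distrib]; ring

lemma B_smul_left (c : ZMod 2) (u v : V g) : B (c • u) v = c * B u v := by
  simp [B, Finset.mul_sum, mul_add, mul_assoc, mul_left_comm]

lemma B_smul_right (c : ZMod 2) (u v : V g) : B u (c • v) = c * B u v := by
  simp [B, Finset.mul_sum, mul_add, mul_assoc, mul_left_comm]

lemma B_self (v : V g) : B v v = 0 := by
  simp [B]; exact CharTwo.add_self_eq_zero _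

lemma B_single_left (v : V g) (i : Fin g) : B v (0, Pi.single i 1) = v.1 i := by
  simp [B, Pi.single_apply, mul_ite]

lemma B_single_right (v : V g) (i : Fin g) : B v (Pi.single i 1, 0) = v.2 i := by
  simp [B, Pi.single_apply, mul_ite]

lemma B_nondeg (v : V g) (h : ∀ x, B v x = 0) : v = 0 := by
  ext i
  · simpa [B_single_left] using h (0, Pi.single i 1)
  · simpa [B_single_right] using h (Pi.single i 1, 0)

lemma decomp (x : V g) :
    x = ∑ i, x.1 i • ((Pi.single i 1 : Fin g → ZMod 2), (0 : Fin g → ZMod 2))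
      + ∑ i, x.2 i • ((0 : Fin g → ZMod 2), (Pi.single i 1 : Fin g → ZMod 2)) := by
  ext j
  · simp [Prod.fst_sum, Prod.snd_sum, Finset.sum_apply, Pi.single_apply, mul_ite]
  · simp [Prod.fst_sum, Prod.snd_sum, Finset.sum_apply, Pi.single_apply, mul_ite]

lemma Brepr (ℓ : V g →ₗ[ZMod 2] ZMod 2) (x : V g) :
    ℓ x = ∑ i, ℓ (0, Pi.single i 1) * x.2 i + ∑ i, x.1 i * ℓ (Pi.single i 1, 0) := by
  conv_lhs => rw [decomp x]
  rw [map_add, map_sum, map_sum]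
  simp only [map_smul, smul_eq_mul]
  rw [add_comm]
  congr 1
  exact Finset.sum_congr rfl fun i _ => mul_comm _ _

/-- Existence of the difference vector. -/
lemma exists_diff {q q0 : V g → ZMod 2} (hq : IsQuad q) (hq0 : IsQuad q0) :
    ∃ v : V g, ∀ x, q x = q0 x + B v x := by
  have hadd : ∀ u w : V g, (q (u + w) + q0 (u + w)) = (q u + q0 u) + (q w + q0 w) := by
    intro u w
    rw [hq, hq0]
    ring_nf
    rw [show (2 : ZMod 2) = 0 from rfl]
    ring
  let L : V g →+ ZMod 2 := AddMonoidHom.mk' (fun x => q x + q0 x) hadd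
  let ℓ : V g →ₗ[ZMod 2] ZMod 2 := L.toZModLinearMap 2
  refine ⟨(fun i => ℓ (0, Pi.single i 1), fun i => ℓ (Pi.single i 1, 0)), fun x => ?_⟩
  have h1 : B (fun i => ℓ (0, Pi.single i 1), fun i => ℓ (Pi.single i 1, 0)) x
      = ℓ x := by
    rw [Brepr ℓ x]; rfl
  have h2 : ℓ x = q x + q0 x := rfl
  rw [h1, h2]
  have : q0 x + q0 x = 0 := CharTwo.add_self_eq_zero _
  rw [show q0 x + (q x + q0 x) = q x + (q0 x + q0 x) by ring, this, add_zero]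

lemma diff_unique {q q0 : V g → ZMod 2} {v v' : V g}
    (h : ∀ x, q x = q0 x + B v x) (h' : ∀ x, q x = q0 x + B v' x) : v = v' := by
  have hz : v + v' = 0 := by
    apply B_nondeg
    intro x
    have hb : B v x = B v' x := by
      have := (h x).symm.trans (h' x)
      exact add_left_cancel this
    rw [B_add_left, hb, CharTwo.add_self_eq_zero]
  have : v' + v' = 0 := by
    have h2 : (2 : ℕ) • v' = 0 := ZModModule.char_nsmul_eq_zero 2 v'
    rw [two_nsmul] at h2
    exact h2
  calc v = v + v' + v' := by rw [add_assoc, this, add_zero]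
    _ = v' := by rw [hz, zero_add]

/-- `B` as a bilinear form. -/
def Bbil (g : ℕ) : LinearMap.BilinForm (ZMod 2) (V g) :=
  LinearMap.mk₂ (ZMod 2) B B_add_left B_smul_left B_add_right B_smul_right

lemma Bbil_apply (u v : V g) : Bbil g u v = B u v := rfl

lemma Bbil_refl : (Bbil g).IsRefl := fun u v h => by
  rw [Bbil_apply, B_comm] at h; exact h

lemma Bbil_nondeg : (Bbil g).Nondegenerate :=
  Bbil_refl.nondegenerate_iff_separatingLeft.mpr fun v h => B_nondeg v h

lemma finrank_V : Module.finrank (ZMod 2) (V g) = 2 * g := by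
  simp [Module.finrank_prod]
  ring

end aux

theorem totally_syzygetic_set_bound (g : ℕ) (hg : 1 ≤ g)
    (S : Set (V g → ZMod 2))
    (hS : ∀ q ∈ S, IsQuad q)
    (hsyz : ∀ q1 ∈ S, ∀ q2 ∈ S, ∀ q3 ∈ S, q1 ≠ q2 → q1 ≠ q3 → q2 ≠ q3 →
      ∀ v12 v13 : V g, (∀ x, q2 x = q1 x + B v12 x) → (∀ x, q3 x = q1 x + B v13 x) →
        B v12 v13 = 0)
    (q0 : V g → ZMod 2) (hq0 : q0 ∈ S) :
    (∀ w ∈ Submodule.span (ZMod 2) {v : V g | ∃ q ∈ S, ∀ x, q x = q0 x + B v x},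
      ∀ w' ∈ Submodule.span (ZMod 2) {v : V g | ∃ q ∈ S, ∀ x, q x = q0 x + B v x},
        B w w' = 0) ∧
    Nat.card S ≤ 2 ^ g := by
  set D : Set (V g) := {v : V g | ∃ q ∈ S, ∀ x, q x = q0 x + B v x} with hD
  -- pairwise orthogonality on D
  have pairD : ∀ v ∈ D, ∀ v' ∈ D, B v v' = 0 := by
    rintro v ⟨q, hq, hv⟩ v' ⟨q', hq', hv'⟩
    by_cases hvv : v = v'
    · rw [hvv]; exact B_self v'
    by_cases hqz : q = q0
    · have : v = 0 := by
        apply B_nondeg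
        intro x
        have := hv x
        rw [hqz] at this
        exact (left_eq_add.mp this)
      rw [this]; exact B_zero_left v'
    by_cases hq'z : q' = q0
    · have : v' = 0 := by
        apply B_nondeg
        intro x
        have := hv' x
        rw [hq'z] at this
        exact (left_eq_add.mp this)
      rw [this]; exact B_zero_right v
    by_cases hqq : q = q'
    · exact absurd (diff_unique hv (hqq ▸ hv')) hvv
    · exact hsyz q0 hq0 q hq q' hq' (Ne.symm hqz) (Ne.symm hq'z) hqq v v' hv hv'
  set W := Submodule.span (ZMod 2) D with hW
  -- span orthogonality
  have spanOrth : ∀ w ∈ W, ∀ w' ∈ W, B w w' = 0 := by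
    have step1 : ∀ v ∈ D, ∀ w' ∈ W, B v w' = 0 := by
      intro v hv w' hw'
      induction hw' using Submodule.span_induction with
      | mem x hx => exact pairD v hv x hx
      | zero => exact B_zero_right v
      | add x y _ _ hx hy => rw [B_add_right, hx, hy, add_zero]
      | smul c x _ hx => rw [B_smul_right, hx, mul_zero]
    intro w hw w' hw'
    induction hw using Submodule.span_induction with
    | mem x hx => exact step1 x hx w' hw'
    | zero => exact B_zero_left w'
    | add x y _ _ hx hy => rw [B_add_left, hx, hy, add_zero]
    | smul c x _ hx => rw [B_smul_left, hx, mul_zero]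
  refine ⟨spanOrth, ?_⟩
  -- the injection from S into W
  have exv : ∀ q ∈ S, ∃ v : V g, (∀ x, q x = q0 x + B v x) ∧ v ∈ W := by
    intro q hq
    obtain ⟨v, hv⟩ := exists_diff (hS q hq) (hS q0 hq0)
    exact ⟨v, hv, Submodule.subset_span ⟨q, hq, hv⟩⟩
  choose f hf1 hf2 using exv
  have finj : Function.Injective (fun q : S => (⟨f q q.2, hf2 q q.2⟩ : W)) := by
    rintro ⟨q1, h1⟩ ⟨q2, h2⟩ heq
    simp only [Subtype.mk.injEq] at heq ⊢
    funext x
    rw [hf1 q1 h1 x, hf1 q2 h2 x, heq]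
  -- W is isotropic, so finrank W ≤ g
  have hWle : W ≤ (Bbil g).orthogonal W := by
    intro x hx
    intro n hn
    exact spanOrth n hn x hx
  have hfr : Module.finrank (ZMod 2) W ≤ g := by
    have h1 := LinearMap.BilinForm.finrank_orthogonal (B := Bbil g)
      Bbil_nondeg W
    have h2 : Module.finrank (ZMod 2) W ≤
        Module.finrank (ZMod 2) ((Bbil g).orthogonal W) :=
      Submodule.finrank_mono hWle
    have h3 : Module.finrank (ZMod 2) W ≤ Module.finrank (ZMod 2) (V g) :=
      Submodule.finrank_le W
    rw [finrank_V] at h1 h3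
    omega
  haveI : Fintype W := Fintype.ofFinite _
  have hcardW : Nat.card W = 2 ^ Module.finrank (ZMod 2) W := by
    have := Module.card_eq_pow_finrank (K := ZMod 2) (V := W)
    rw [Nat.card_eq_fintype_card, this, ZMod.card]
  calc Nat.card S ≤ Nat.card W := Nat.card_le_card_of_injective _ finj
    _ = 2 ^ Module.finrank (ZMod 2) W := hcardW
    _ ≤ 2 ^ g := Nat.pow_le_pow_right (by norm_num) hfr
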